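/- With the setup of the fractional spanning-tree packing: spanning trees T_α of G = ([N],E) with weights w_α ≥ 0 satisfying capacity constraints Σ_{α: e∈T_α} w_α ≤ r_e, and R_i defined as R_i = Σ_α w_α(d_i^{(α)} - 1) + (1/2)·Σ_{e∋i}(r_e - Σ_{α: e∈T_α} w_α), the constraints Σ_{i∈I} R_i ≥ r[E(I)] hold for every nonempty proper subset I ⊊ [N]. -/

import Mathlib

/-- Sum of edge weights over a set of (potential) edges. -/
noncomputable def wsum {N : ℕ} (r : Sym2 (Fin N) → ℝ) (s : Set (Sym2 (Fin N))) : ℝ :=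
  ∑ e ∈ (Set.toFinite s).toFinset, r e

lemma parent_step {V : Type*} {H : SimpleGraph V} (hc : H.Connected) {v0 i : V} (hne : i ≠ v0) :
    ∃ x, H.Adj i x ∧ H.dist v0 x < H.dist v0 i := by
  obtain ⟨p, hp⟩ := hc.exists_walk_length_eq_dist v0 i
  have hpos : 0 < H.dist v0 i := hc.pos_dist_of_ne (Ne.symm hne)
  have hnn : ¬ p.reverse.Nil := by
    rw [SimpleGraph.Walk.nil_iff_length_eq, SimpleGraph.Walk.length_reverse, hp]
    omega
  obtain ⟨x, h, q, hq⟩ := SimpleGraph.Walk.not_nil_iff.mp hnn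
  refine ⟨x, h, ?_⟩
  have hql : q.length = H.dist v0 i - 1 := by
    have := congrArg SimpleGraph.Walk.length hq
    rw [SimpleGraph.Walk.length_reverse, hp] at this
    simp at this
    omega
  have : H.dist v0 x ≤ q.reverse.length := SimpleGraph.dist_le _
  rw [SimpleGraph.Walk.length_reverse, hql] at this
  omega

open scoped Classical in
lemma factB {N : ℕ} (H : SimpleGraph (Fin N)) (hc : H.Connected) (I : Finset (Fin N))
    (hI : I ≠ Finset.univ) :
    I.card ≤ ((Finset.univ.filter (fun e : Sym2 (Fin N) => e ∈ H.edgeSet)).filter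
      (fun e => ∃ v ∈ e, v ∈ I)).card := by
  classical
  obtain ⟨v0, hv0⟩ : ∃ v0, v0 ∉ I := by
    by_contra h
    push_neg at h
    exact hI (Finset.eq_univ_iff_forall.mpr h)
  have hpar : ∀ i ∈ I, ∃ x, H.Adj i x ∧ H.dist v0 x < H.dist v0 i := by
    intro i hi
    exact parent_step hc (fun h => hv0 (h ▸ hi))
  choose! par hadj hdist using hpar
  apply Finset.card_le_card_of_injOn (fun i => s(i, par i))
  · intro i hi
    simp only [Finset.mem_coe, Finset.mem_filter, Finset.mem_univ, true_and]
    exact ⟨(hadj i hi), ⟨i, Sym2.mem_mk_left _ _, hi⟩⟩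
  · intro i hi j hj hij
    simp only [Sym2.eq_iff] at hij
    rcases hij with ⟨h1, _⟩ | ⟨h1, h2⟩
    · exact h1
    · exfalso
      have d1 := hdist i hi
      have d2 := hdist j hj
      rw [← h1] at d2
      rw [h2] at d1
      omega


open scoped Classical in
/-- For a fractional spanning-tree packing `{T_α, w_α}` respecting capacities,
with `R_i = Σ_α w_α (d_i^{(α)} - 1) + (1/2)·Σ_{e∋i}(r_e - Σ_{α: e∈T_α} w_α)`, the
constraints `Σ_{i∈I} R_i ≥ r[E(I)]` hold for every nonempty proper subset `I`. -/
theorem stmt_16 {N m : ℕ} (hN : 2 ≤ N) (G : SimpleGraph (Fin N))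
    (r : Sym2 (Fin N) → ℝ) (hr : ∀ e, 0 ≤ r e)
    (T : Fin m → SimpleGraph (Fin N))
    (hle : ∀ α, T α ≤ G) (htree : ∀ α, (T α).IsTree)
    (w : Fin m → ℝ) (hw : ∀ α, 0 ≤ w α)
    (hcap : ∀ e ∈ G.edgeSet,
      (∑ α ∈ Finset.univ.filter (fun α => e ∈ (T α).edgeSet), w α) ≤ r e)
    (R : Fin N → ℝ)
    (hR : ∀ i, R i =
      (∑ α, w α * (({e : Sym2 (Fin N) | e ∈ (T α).edgeSet ∧ i ∈ e}.ncard : ℝ) - 1)) +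
        (1 / 2) * ∑ e ∈ (Set.toFinite {e : Sym2 (Fin N) | e ∈ G.edgeSet ∧ i ∈ e}).toFinset,
          (r e - ∑ α ∈ Finset.univ.filter (fun α => e ∈ (T α).edgeSet), w α)) :
    ∀ I : Finset (Fin N), I.Nonempty → I ≠ Finset.univ →
      wsum r {e | e ∈ G.edgeSet ∧ ∀ v ∈ e, v ∈ I} ≤ ∑ i ∈ I, R i := by
  classical
  intro I hI0 hIu
  set GE : Finset (Sym2 (Fin N)) := Finset.univ.filter (fun e : Sym2 (Fin N) => e ∈ G.edgeSet)
    with hGEdef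
  set GI : Finset (Sym2 (Fin N)) := GE.filter (fun e => ∀ v ∈ e, v ∈ I) with hGIdef
  set TE : Fin m → Finset (Sym2 (Fin N)) :=
    fun α => Finset.univ.filter (fun e => e ∈ (T α).edgeSet) with hTEdef
  set c : Sym2 (Fin N) → ℝ :=
    fun e => ∑ α ∈ Finset.univ.filter (fun α => e ∈ (T α).edgeSet), w α with hcdef
  set t : Sym2 (Fin N) → ℕ := fun e => (I.filter (fun i => i ∈ e)).card with htdef
  -- basic facts about t
  have hkey : ∀ e ∈ GE, t e ≤ 2 ∧ ((∀ v ∈ e, v ∈ I) ↔ t e = 2) ∧ ((∃ v ∈ e, v ∈ I) ↔ 1 ≤ t e) := by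
    intro e he
    induction e with
    | _ u v =>
      have hne : u ≠ v := by
        have : s(u, v) ∈ G.edgeSet := by simpa [hGEdef] using he
        exact (G.ne_of_adj (by simpa using this))
      have hfil : I.filter (fun i => i ∈ s(u, v)) = I ∩ {u, v} := by
        ext i
        simp [Sym2.mem_iff]
      have hcard2 : ({u, v} : Finset (Fin N)).card = 2 := Finset.card_pair hne
      have ht : t s(u, v) = (I ∩ {u, v}).card := congrArg Finset.card hfil
      have hsub : I ∩ {u, v} ⊆ {u, v} := Finset.inter_subset_right
      have hle2 : t s(u, v) ≤ 2 := by
        rw [ht, ← hcard2]; exact Finset.card_le_card hsub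
      refine ⟨hle2, ?_, ?_⟩
      · constructor
        · intro h
          have hu : u ∈ I := h u (Sym2.mem_mk_left _ _)
          have hv : v ∈ I := h v (Sym2.mem_mk_right _ _)
          rw [ht]
          have : I ∩ {u, v} = {u, v} := by
            apply Finset.Subset.antisymm hsub
            intro x hx
            simp at hx
            rcases hx with rfl | rfl <;> simp [hu, hv]
          rw [this, hcard2]
        · intro h x hx
          have heq : I ∩ {u, v} = {u, v} :=
            Finset.eq_of_subset_of_card_le hsub (by rw [hcard2, ← ht, h])
          rw [Sym2.mem_iff] at hx
          rcases hx with rfl | rfl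
          · exact (Finset.mem_inter.mp (heq ▸ (by simp : x ∈ ({x, v} : Finset (Fin N))))).1
          · exact (Finset.mem_inter.mp (heq ▸ (by simp : x ∈ ({u, x} : Finset (Fin N))))).1
      · constructor
        · rintro ⟨x, hx, hxI⟩
          have : x ∈ I ∩ {u, v} := by
            rw [Sym2.mem_iff] at hx
            simp [hxI]
            tauto
          rw [ht]
          exact Finset.card_pos.mpr ⟨x, this⟩
        · intro h
          rw [ht] at h
          obtain ⟨x, hx⟩ := Finset.card_pos.mp h
          simp at hx
          rcases hx with ⟨hxI, rfl | rfl⟩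
          · exact ⟨x, Sym2.mem_mk_left _ _, hxI⟩
          · exact ⟨x, Sym2.mem_mk_right _ _, hxI⟩
  have hTsub : ∀ α, TE α ⊆ GE := by
    intro α e he
    simp only [hTEdef, hGEdef, Finset.mem_filter, Finset.mem_univ, true_and] at he ⊢
    exact SimpleGraph.edgeSet_mono (hle α) he
  -- rewrite degree as a sum
  have hdeg : ∀ (α : Fin m) (i : Fin N),
      (({e : Sym2 (Fin N) | e ∈ (T α).edgeSet ∧ i ∈ e}.ncard : ℝ))
        = ∑ e ∈ TE α, (if i ∈ e then (1 : ℝ) else 0) := by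
    intro α i
    rw [Finset.sum_boole]
    congr 1
    have : {e : Sym2 (Fin N) | e ∈ (T α).edgeSet ∧ i ∈ e}
        = (((TE α).filter (fun e => i ∈ e) : Finset (Sym2 (Fin N))) : Set (Sym2 (Fin N))) := by
      ext e
      simp [hTEdef]
    rw [this, Set.ncard_coe_finset]
  have hEi : ∀ i : Fin N, (Set.toFinite {e : Sym2 (Fin N) | e ∈ G.edgeSet ∧ i ∈ e}).toFinset
      = GE.filter (fun e => i ∈ e) := by
    intro i
    ext e
    simp [hGEdef, Set.Finite.mem_toFinset]
  have boole_mul : ∀ (e : Sym2 (Fin N)) (a : ℝ),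
      (∑ i ∈ I, (if i ∈ e then a else 0)) = (t e : ℝ) * a := by
    intro e a
    rw [Finset.sum_ite, Finset.sum_const, Finset.sum_const_zero, add_zero, nsmul_eq_mul, htdef]
  have hXsum : ∀ α, (∑ i ∈ I, ∑ e ∈ TE α, (if i ∈ e then (1 : ℝ) else 0))
      = ∑ e ∈ TE α, (t e : ℝ) := by
    intro α
    rw [Finset.sum_comm]
    exact Finset.sum_congr rfl fun e _ => by simpa using boole_mul e 1
  have hBsum : (∑ i ∈ I, ∑ e ∈ GE.filter (fun e => i ∈ e), (r e - c e))
      = ∑ e ∈ GE, (t e : ℝ) * (r e - c e) := by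
    simp only [Finset.sum_filter]
    rw [Finset.sum_comm]
    exact Finset.sum_congr rfl fun e _ => boole_mul e _
  -- Step 1 : rewrite the sum of R
  have step1 : ∑ i ∈ I, R i
      = (∑ α, w α * ((∑ e ∈ TE α, (t e : ℝ)) - I.card))
        + (1 / 2) * ∑ e ∈ GE, (t e : ℝ) * (r e - c e) := by
    have : ∑ i ∈ I, R i
        = (∑ i ∈ I, ∑ α, w α * ((∑ e ∈ TE α, (if i ∈ e then (1 : ℝ) else 0)) - 1))
          + ∑ i ∈ I, (1 / 2) * ∑ e ∈ GE.filter (fun e => i ∈ e), (r e - c e) := by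
      rw [← Finset.sum_add_distrib]
      refine Finset.sum_congr rfl fun i _ => ?_
      rw [hR i]
      congr 1
      · exact Finset.sum_congr rfl fun α _ => by rw [hdeg α i]
      · rw [hEi i]
    rw [this]
    congr 1
    · rw [Finset.sum_comm]
      refine Finset.sum_congr rfl fun α _ => ?_
      rw [← Finset.mul_sum, Finset.sum_sub_distrib, Finset.sum_const, nsmul_eq_mul, mul_one,
        hXsum α]
    · rw [← Finset.mul_sum, hBsum]
  -- capacity slack is nonnegative
  have hrc : ∀ e ∈ GE, 0 ≤ r e - c e := by
    intro e he
    have : e ∈ G.edgeSet := by simpa [hGEdef] using he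
    exact sub_nonneg.mpr (hcap e this)
  -- Step 2 : bound the second term
  have hB_ge : (∑ e ∈ GI, (r e - c e)) ≤ (1 / 2) * ∑ e ∈ GE, (t e : ℝ) * (r e - c e) := by
    rw [Finset.mul_sum, hGIdef, Finset.sum_filter]
    apply Finset.sum_le_sum
    intro e he
    by_cases h : ∀ v ∈ e, v ∈ I
    · rw [if_pos h, ((hkey e he).2.1).mp h]
      push_cast
      ring_nf
      rfl
    · rw [if_neg h]
      have := hrc e he
      positivity
  -- Step 3 : tree bound per α
  have htree_card : ∀ α, (I.card : ℝ) + (((TE α).filter (fun e => ∀ v ∈ e, v ∈ I)).card : ℝ)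
      ≤ ∑ e ∈ TE α, (t e : ℝ) := by
    intro α
    have hsplit : ∀ e ∈ TE α, (t e : ℝ)
        = (if 1 ≤ t e then (1 : ℝ) else 0) + (if t e = 2 then (1 : ℝ) else 0) := by
      intro e he
      have h2 := (hkey e (hTsub α he)).1
      rcases h : t e with _ | _ | k
      · norm_num
      · norm_num
      · rw [h] at h2
        have : k = 0 := by omega
        subst this
        norm_num
    rw [Finset.sum_congr rfl hsplit, Finset.sum_add_distrib, Finset.sum_boole, Finset.sum_boole]
    have e1 : (TE α).filter (fun e => 1 ≤ t e) = (TE α).filter (fun e => ∃ v ∈ e, v ∈ I) :=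
      Finset.filter_congr fun e he => (iff_comm.mp ((hkey e (hTsub α he)).2.2))
    have e2 : (TE α).filter (fun e => t e = 2) = (TE α).filter (fun e => ∀ v ∈ e, v ∈ I) :=
      Finset.filter_congr fun e he => (iff_comm.mp ((hkey e (hTsub α he)).2.1))
    rw [e1, e2]
    have hfb := factB (T α) (htree α).isConnected I hIu
    have : I.card ≤ ((TE α).filter (fun e => ∃ v ∈ e, v ∈ I)).card := by
      convert hfb using 2
    have := Nat.cast_le (α := ℝ) |>.mpr this
    linarith
  -- Step 4 : bound the first term
  have hGIT : ∀ α, GI.filter (fun e => e ∈ (T α).edgeSet)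
      = (TE α).filter (fun e => ∀ v ∈ e, v ∈ I) := by
    intro α
    ext e
    simp only [hGIdef, hGEdef, hTEdef, Finset.mem_filter, Finset.mem_univ, true_and]
    constructor
    · rintro ⟨⟨_, h2⟩, h3⟩
      exact ⟨h3, h2⟩
    · rintro ⟨h1, h2⟩
      exact ⟨⟨SimpleGraph.edgeSet_mono (hle α) h1, h2⟩, h1⟩
  have hA_ge : (∑ e ∈ GI, c e) ≤ ∑ α, w α * ((∑ e ∈ TE α, (t e : ℝ)) - I.card) := by
    have hstep : (∑ e ∈ GI, c e)
        = ∑ α, w α * (((TE α).filter (fun e => ∀ v ∈ e, v ∈ I)).card : ℝ) := by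
      simp only [hcdef, Finset.sum_filter]
      rw [Finset.sum_comm]
      refine Finset.sum_congr rfl fun α _ => ?_
      rw [Finset.sum_ite, Finset.sum_const, Finset.sum_const_zero, add_zero, nsmul_eq_mul,
        hGIT α]
      ring
    rw [hstep]
    apply Finset.sum_le_sum
    intro α _
    have := htree_card α
    exact mul_le_mul_of_nonneg_left (by linarith) (hw α)
  -- Conclusion
  have hwsum : wsum r {e | e ∈ G.edgeSet ∧ ∀ v ∈ e, v ∈ I} = ∑ e ∈ GI, r e := by
    unfold wsum
    apply Finset.sum_congr _ fun _ _ => rfl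
    ext e
    simp [hGIdef, hGEdef, Set.Finite.mem_toFinset]
  calc wsum r {e | e ∈ G.edgeSet ∧ ∀ v ∈ e, v ∈ I} = ∑ e ∈ GI, r e := hwsum
    _ = (∑ e ∈ GI, c e) + ∑ e ∈ GI, (r e - c e) := by
        rw [← Finset.sum_add_distrib]
        exact Finset.sum_congr rfl fun e _ => by ring
    _ ≤ (∑ α, w α * ((∑ e ∈ TE α, (t e : ℝ)) - I.card))
        + (1 / 2) * ∑ e ∈ GE, (t e : ℝ) * (r e - c e) := add_le_add hA_ge hB_ge
    _ = ∑ i ∈ I, R i := step1.symm
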